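/- Let $\mathbb{F}$ be a field and $V_1,\dots,V_d$ finite-dimensional $\mathbb{F}$-vector spaces with $d \geq 2$. A tensor $T \in V_1 \otimes \cdots \otimes V_d$ has slice rank at most $r$ if and only if there exist subspaces $U_i \subseteq V_i^*$ with $\sum_{i=1}^d \mathrm{codim}(U_i) \leq r$ such that $\langle T, u_1 \otimes \cdots \otimes u_d \rangle = 0$ for all $u_i \in U_i$. -/

import Mathlib

open scoped TensorProduct BigOperators

/-- The slice rank of a tensor in a tensor product of vector spaces: the least `r` such that
`T` is a sum of `r` tensors, each lying (for some direction `i`) in the span of pure tensors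
whose `i`-th factor is a fixed vector `u`. -/
noncomputable def tensorSliceRank (F : Type*) [Field F] {d : ℕ} (V : Fin d → Type*)
    [∀ i, AddCommGroup (V i)] [∀ i, Module F (V i)] (T : ⨂[F] i, V i) : ℕ :=
  sInf {r | ∃ S : Fin r → ⨂[F] i, V i,
    (∀ j, ∃ i : Fin d, ∃ u : V i,
      S j ∈ Submodule.span F {t | ∃ v : ∀ k, V k, v i = u ∧ t = PiTensorProduct.tprod F v}) ∧
    T = ∑ j, S j}

/-- The natural pairing `⟨T, u₁ ⊗ ⋯ ⊗ u_d⟩` of a tensor against a family of functionals. -/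
noncomputable def tensorPairing (F : Type*) [Field F] {d : ℕ} (V : Fin d → Type*)
    [∀ i, AddCommGroup (V i)] [∀ i, Module F (V i)]
    (f : ∀ i, Module.Dual F (V i)) : (⨂[F] i, V i) →ₗ[F] F :=
  PiTensorProduct.lift ((MultilinearMap.mkPiAlgebra F (Fin d) F).compLinearMap f)

section Aux

variable {F : Type*} [Field F] {d : ℕ} {V : Fin d → Type*}
  [∀ i, AddCommGroup (V i)] [∀ i, Module F (V i)]

lemma tensorPairing_tprod (f : ∀ i, Module.Dual F (V i)) (v : ∀ i, V i) :
    tensorPairing F V f (PiTensorProduct.tprod F v) = ∏ i, f i (v i) := by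
  simp [tensorPairing]

/-- If a tensor can be written as a sum of slices indexed by a finite type of cardinality
at most `r`, then its slice rank is at most `r`. -/
lemma sliceRank_le_of_family (hd : 0 < d) {ι : Type*} [Fintype ι] {r : ℕ}
    (T : ⨂[F] i, V i) (S : ι → ⨂[F] i, V i)
    (hS : ∀ p, ∃ i : Fin d, ∃ u : V i,
      S p ∈ Submodule.span F {t | ∃ v : ∀ k, V k, v i = u ∧ t = PiTensorProduct.tprod F v})
    (hT : T = ∑ p, S p) (hcard : Fintype.card ι ≤ r) :
    tensorSliceRank F V T ≤ r := by
  classical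
  apply Nat.sInf_le
  obtain ⟨e⟩ : Nonempty (ι ↪ Fin r) :=
    Function.Embedding.nonempty_of_card_le (by simpa using hcard)
  refine ⟨fun j => if h : ∃ p, e p = j then S h.choose else 0, ?_, ?_⟩
  · intro j
    dsimp only
    by_cases h : ∃ p, e p = j
    · rw [dif_pos h]; exact hS _
    · rw [dif_neg h]
      exact ⟨⟨0, hd⟩, 0, Submodule.zero_mem _⟩
  · have h1 : ∑ j : Fin r, (if h : ∃ p, e p = j then S h.choose else 0)
        = ∑ j ∈ Finset.univ.image e, (if h : ∃ p, e p = j then S h.choose else 0) := by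
      refine (Finset.sum_subset (Finset.subset_univ _) ?_).symm
      intro j _ hj
      rw [dif_neg]
      rintro ⟨p, rfl⟩
      exact hj (Finset.mem_image_of_mem _ (Finset.mem_univ p))
    rw [h1, Finset.sum_image (fun a _ b _ h => e.injective h), hT]
    refine Finset.sum_congr rfl fun p _ => ?_
    have h : ∃ q, e q = e p := ⟨p, rfl⟩
    rw [dif_pos h, e.injective h.choose_spec]

/-- Expansion of a tensor in terms of a basis of each factor, with coefficients given by the
pairing against dual basis functionals. -/
lemma tensor_expand {β : Fin d → Type*} [∀ i, Fintype (β i)]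
    (b : ∀ i, Module.Basis (β i) F (V i)) (T : ⨂[F] i, V i) :
    T = ∑ α : ∀ i, β i,
      tensorPairing F V (fun i => (b i).coord (α i)) T •
        PiTensorProduct.tprod F (fun i => b i (α i)) := by
  classical
  have key : (LinearMap.id : (⨂[F] i, V i) →ₗ[F] (⨂[F] i, V i))
      = ∑ α : ∀ i, β i,
          LinearMap.smulRight (tensorPairing F V (fun i => (b i).coord (α i)))
            (PiTensorProduct.tprod F (fun i => b i (α i))) := by
    refine LinearMap.ext_on PiTensorProduct.span_tprod_eq_top ?_
    rintro _ ⟨v, rfl⟩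
    simp only [LinearMap.id_apply, LinearMap.sum_apply, LinearMap.smulRight_apply,
      tensorPairing_tprod, Module.Basis.coord_apply]
    have hv : v = fun i => ∑ k, (b i).repr (v i) k • b i k :=
      funext fun i => ((b i).sum_repr (v i)).symm
    conv_lhs => rw [hv]
    rw [MultilinearMap.map_sum]
    refine Finset.sum_congr rfl fun α _ => ?_
    rw [MultilinearMap.map_smul_univ]
  conv_lhs => rw [← LinearMap.id_apply (R := F) T, key]
  simp

/-- The codimension of a subspace of the dual equals the dimension of its coannihilator. -/
lemma finrank_quotient_eq_coann {K W : Type*} [Field K] [AddCommGroup W] [Module K W]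
    [FiniteDimensional K W] (Φ : Subspace K (Module.Dual K W)) :
    Module.finrank K (Module.Dual K W ⧸ Φ) = Module.finrank K Φ.dualCoannihilator := by
  have h1 := Subspace.finrank_add_finrank_dualCoannihilator_eq Φ
  have h2 := Submodule.finrank_quotient_add_finrank Φ
  have h3 : Module.finrank K (Module.Dual K W) = Module.finrank K W :=
    Subspace.dual_finrank_eq
  omega

end Aux

theorem slice_rank_le_iff_dual (F : Type*) [Field F] {d : ℕ} (hd : 2 ≤ d)
    (V : Fin d → Type*)
    [∀ i, AddCommGroup (V i)] [∀ i, Module F (V i)] [∀ i, FiniteDimensional F (V i)]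
    (T : ⨂[F] i, V i) (r : ℕ) :
    tensorSliceRank F V T ≤ r ↔
      ∃ U : ∀ i, Submodule F (Module.Dual F (V i)),
        (∑ i, Module.finrank F (Module.Dual F (V i) ⧸ U i)) ≤ r ∧
        ∀ f : ∀ i, Module.Dual F (V i), (∀ i, f i ∈ U i) → tensorPairing F V f T = 0 := by
  classical
  have hd0 : 0 < d := by omega
  constructor
  · intro h
    -- the defining set is nonempty
    have hne : {r | ∃ S : Fin r → ⨂[F] i, V i,
        (∀ j, ∃ i : Fin d, ∃ u : V i,
          S j ∈ Submodule.span F {t | ∃ v : ∀ k, V k, v i = u ∧ t = PiTensorProduct.tprod F v}) ∧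
        T = ∑ j, S j}.Nonempty := by
      have hT : T ∈ Submodule.span F (Set.range (PiTensorProduct.tprod F (s := V))) := by
        rw [PiTensorProduct.span_tprod_eq_top]; trivial
      obtain ⟨n, c, g, hsum⟩ := Submodule.mem_span_set'.mp hT
      refine ⟨n, fun j => c j • (g j : ⨂[F] i, V i), fun j => ?_, hsum.symm⟩
      obtain ⟨v, hv⟩ := (g j).2
      exact ⟨⟨0, hd0⟩, v ⟨0, hd0⟩,
        Submodule.smul_mem _ _ (Submodule.subset_span ⟨v, rfl, hv.symm⟩)⟩
    obtain ⟨S, hS, hTs⟩ := Nat.sInf_mem hne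
    set r' := tensorSliceRank F V T with hr'
    choose ii uu hu using hS
    -- transport the slice vectors into honest elements of the fibers
    set w : Fin r' → ∀ k, V k := fun j k => if h : ii j = k then h ▸ uu j else 0 with hwdef
    have hwj : ∀ j, w j (ii j) = uu j := fun j => by simp [hwdef]
    set Wfin : ∀ k, Finset (V k) :=
      fun k => (Finset.univ.filter (fun j => ii j = k)).image (fun j => w j k) with hWfin
    set W : ∀ k, Submodule F (V k) :=
      fun k => Submodule.span F ((Wfin k : Set (V k))) with hW
    have huW : ∀ j, uu j ∈ W (ii j) := by
      intro j
      rw [← hwj j]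
      refine Submodule.subset_span ?_
      exact Finset.mem_image_of_mem _ ((@Finset.mem_filter _ (fun a => ii a = ii j) (fun a => instDecidableEqFin d (ii a) (ii j)) _ _).mpr ⟨Finset.mem_univ j, rfl⟩)
    refine ⟨fun k => (W k).dualAnnihilator, ?_, ?_⟩
    · have hcodim : ∀ k, Module.finrank F (Module.Dual F (V k) ⧸ (W k).dualAnnihilator)
          = Module.finrank F (W k) := by
        intro k
        rw [finrank_quotient_eq_coann, Subspace.dualAnnihilator_dualCoannihilator_eq]
      calc ∑ k, Module.finrank F (Module.Dual F (V k) ⧸ (W k).dualAnnihilator)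
          = ∑ k, Module.finrank F (W k) := Finset.sum_congr rfl fun k _ => hcodim k
        _ ≤ ∑ k, (Finset.univ.filter (fun j => ii j = k)).card := by
            refine Finset.sum_le_sum fun k _ => ?_
            exact le_trans (finrank_span_finset_le_card (Wfin k)) (Finset.card_image_le)
        _ = r' := by
            rw [← Finset.card_eq_sum_card_fiberwise (fun j _ => Finset.mem_univ (ii j))]
            simp only [Finset.card_univ, Fintype.card_fin]
            rfl
        _ ≤ r := h
    · intro f hf
      rw [hTs, map_sum]
      refine Finset.sum_eq_zero fun j _ => ?_
      have hker : Submodule.span F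
          {t | ∃ v : ∀ k, V k, v (ii j) = uu j ∧ t = PiTensorProduct.tprod F v}
          ≤ LinearMap.ker (tensorPairing F V f) := by
        rw [Submodule.span_le]
        rintro t ⟨v, hv, rfl⟩
        simp only [SetLike.mem_coe, LinearMap.mem_ker, tensorPairing_tprod]
        refine Finset.prod_eq_zero (Finset.mem_univ (ii j)) ?_
        rw [hv]
        exact (Submodule.mem_dualAnnihilator _).mp (hf (ii j)) _ (huW j)
      exact hker (hu j)
  · rintro ⟨U, hUr, hUT⟩
    set W : ∀ i, Subspace F (V i) := fun i => (U i).dualCoannihilator with hWdef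
    have hWU : ∀ i, (W i).dualAnnihilator = U i :=
      fun i => Subspace.dualCoannihilator_dualAnnihilator_eq
    choose W' hW' using fun i => (W i).exists_isCompl
    set b : ∀ i, Module.Basis (Fin (Module.finrank F (W i)) ⊕ Fin (Module.finrank F (W' i))) F (V i) :=
      fun i => ((Module.finBasis F (W i)).prod (Module.finBasis F (W' i))).map
        (Submodule.prodEquivOfIsCompl _ _ (hW' i)) with hbdef
    have hbl : ∀ i k, b i (Sum.inl k) = (Module.finBasis F (W i) k : V i) := by
      intro i k
      simp [hbdef, Module.Basis.map_apply, Module.Basis.prod_apply]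
    have hblW : ∀ i k, b i (Sum.inl k) ∈ W i := fun i k =>
      (hbl i k) ▸ (Module.finBasis F (W i) k).2
    have hcoord : ∀ i (j : Fin (Module.finrank F (W' i))), (b i).coord (Sum.inr j) ∈ U i := by
      intro i j
      rw [← hWU i, Submodule.mem_dualAnnihilator]
      intro x hx
      have hxsum : x = ∑ k, (Module.finBasis F (W i)).repr ⟨x, hx⟩ k • b i (Sum.inl k) := by
        have := congrArg ((W i).subtype) ((Module.finBasis F (W i)).sum_repr ⟨x, hx⟩)
        rw [map_sum] at this
        simp only [map_smul, Submodule.coe_subtype] at this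
        conv_lhs => rw [← this]
        exact Finset.sum_congr rfl fun k _ => by rw [hbl]
      rw [hxsum, map_sum]
      refine Finset.sum_eq_zero fun k _ => ?_
      rw [map_smul]
      simp [Module.Basis.coord_apply, Module.Basis.repr_self_apply]
    -- expand T in the product basis
    have hexp := tensor_expand b T
    set c : (∀ i, Fin (Module.finrank F (W i)) ⊕ Fin (Module.finrank F (W' i))) → F :=
      fun α => tensorPairing F V (fun i => (b i).coord (α i)) T with hcdef
    have hzero : ∀ α, (∀ i, ∃ j, α i = Sum.inr j) → c α = 0 := by
      intro α hα
      apply hUT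
      intro i
      obtain ⟨j, hj⟩ := hα i
      rw [hj]
      exact hcoord i j
    set ι := Σ i : Fin d, Fin (Module.finrank F (W i)) with hι
    set g : (∀ i, Fin (Module.finrank F (W i)) ⊕ Fin (Module.finrank F (W' i))) → Option ι :=
      fun α => if h : ∃ p : ι, α p.1 = Sum.inl p.2 then some h.choose else none with hgdef
    have hgsome : ∀ α p, g α = some p → α p.1 = Sum.inl p.2 := by
      intro α p hp
      by_cases h : ∃ p : ι, α p.1 = Sum.inl p.2
      · rw [hgdef] at hp
        simp only [dif_pos h] at hp
        rw [← Option.some_inj.mp hp]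
        exact h.choose_spec
      · rw [hgdef] at hp; simp only [dif_neg h] at hp
        cases hp
    set S : ι → ⨂[F] i, V i := fun p =>
      ∑ α ∈ Finset.univ.filter (fun α => g α = some p),
        c α • PiTensorProduct.tprod F (fun i => b i (α i)) with hSdef
    have hTsum : T = ∑ p : ι, S p := by
      conv_lhs => rw [hexp]
      rw [← Finset.sum_fiberwise_of_maps_to (g := g) (t := Finset.univ)
        (fun α _ => Finset.mem_univ (g α))
        (fun α => c α • PiTensorProduct.tprod F (fun i => b i (α i)))]
      rw [univ_option, Finset.sum_insertNone]
      have hnone : ∑ α ∈ Finset.univ.filter (fun α => g α = none),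
          c α • PiTensorProduct.tprod F (fun i => b i (α i)) = 0 := by
        refine Finset.sum_eq_zero fun α hα => ?_
        have hαnone : g α = none := (Finset.mem_filter.mp hα).2
        have : ∀ i, ∃ j, α i = Sum.inr j := by
          intro i
          rcases h : α i with k | j
          · exfalso
            have hex : ∃ p : ι, α p.1 = Sum.inl p.2 := ⟨⟨i, k⟩, h⟩
            rw [hgdef] at hαnone
            simp only [dif_pos hex] at hαnone
            cases hαnone
          · exact ⟨j, rfl⟩
        rw [hzero α this, zero_smul]
      rw [hnone, zero_add]
    refine sliceRank_le_of_family hd0 T S ?_ hTsum ?_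
    · intro p
      refine ⟨p.1, b p.1 (Sum.inl p.2), ?_⟩
      refine Submodule.sum_mem _ fun α hα => ?_
      refine Submodule.smul_mem _ _ (Submodule.subset_span ?_)
      refine ⟨fun i => b i (α i), ?_, rfl⟩
      dsimp only
      rw [hgsome α p (Finset.mem_filter.mp hα).2]
    · rw [Fintype.card_sigma]
      simp only [Fintype.card_fin]
      calc ∑ i, Module.finrank F (W i)
          = ∑ i, Module.finrank F (Module.Dual F (V i) ⧸ U i) := by
            refine Finset.sum_congr rfl fun i _ => ?_
            rw [finrank_quotient_eq_coann]
        _ ≤ r := hUr
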